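/- arXiv:2112.15048 — 3 statements merged into one kernel-verified Lean document; each statement's English description precedes it below -/
import Mathlib

section
/- Let K be a field of characteristic 2 and let M = ⁅x_{i_0}^{a_0}, x_{i_1}^{a_1}, …, x_{i_n}^{a_n}⁆ (n ≥ 1) be a left-normed monomial with M ∉ T_ℤ(U_1). Then there exists a permutation σ of {0, 1, …, n} such that a_{σ(0)} is odd, a_{σ(k)} is even for every 1 ≤ k ≤ n, a_{σ(1)} ≤ a_{σ(2)} ≤ ⋯ ≤ a_{σ(n)}, and M − ⁅x_{i_{σ(0)}}^{a_{σ(0)}}, x_{i_{σ(1)}}^{a_{σ(1)}}, …, x_{i_{σ(n)}}^{a_{σ(n)}}⁆ ∈ ⟨S⟩_{T_ℤ}, where S = {⁅x_1^a, x_2^b⁆ : a, b ∈ ℤ, a ≡ b (mod 2)}. -/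
open FreeLieAlgebra LaurentPolynomial

/-- The free Lie algebra `L` over `K` on the generators `x_i^a`, `(a, i) : ℤ × ℕ`;
the generator `x_i^a := FreeLieAlgebra.of K (a, i)` has ℤ-degree `a`. -/
abbrev FL (K : Type*) [Field K] := FreeLieAlgebra K (ℤ × ℕ)

variable (K : Type*) [Field K]

/-- Iterated Lie brackets of generators whose ℤ-degrees sum to `a`. -/
inductive IsHomBracket : FL K → ℤ → Prop
  | gen (a : ℤ) (i : ℕ) : IsHomBracket (FreeLieAlgebra.of K (a, i)) a
  | bracket {u v : FL K} {a b : ℤ} :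
      IsHomBracket u a → IsHomBracket v b → IsHomBracket ⁅u, v⁆ (a + b)

/-- The homogeneous component `L_a` of the free Lie algebra. -/
noncomputable def homComp (a : ℤ) : Submodule K (FL K) :=
  Submodule.span K {w : FL K | IsHomBracket K w a}

/-- A graded endomorphism of the free Lie algebra. -/
def IsGradedEndo (φ : FL K →ₗ⁅K⁆ FL K) : Prop :=
  ∀ (a : ℤ) (i : ℕ), φ (FreeLieAlgebra.of K (a, i)) ∈ homComp K a

/-- A `T_ℤ`-ideal: a Lie ideal stable under all graded endomorphisms. -/
def IsTIdeal (I : LieIdeal K (FL K)) : Prop :=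
  ∀ φ : FL K →ₗ⁅K⁆ FL K, IsGradedEndo K φ → ∀ x ∈ I, φ x ∈ I

/-- `⟨S⟩_{T_ℤ}`, the smallest `T_ℤ`-ideal containing `S` (as a set of elements). -/
def TSpan (S : Set (FL K)) : Set (FL K) :=
  {x : FL K | ∀ I : LieIdeal K (FL K), IsTIdeal K I → S ⊆ (I : Set (FL K)) → x ∈ I}

/-- `U_1`, the Lie algebra of `K`-linear derivations of `K[t, t⁻¹]`. -/
abbrev U1 (K : Type*) [Field K] := Derivation K (LaurentPolynomial K) (LaurentPolynomial K)

/-- Evaluation of a derivation of `K[t,t⁻¹]` at `t`, as a linear map. -/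
noncomputable def evalT : U1 K →ₗ[K] LaurentPolynomial K where
  toFun D := D (T 1)
  map_add' D E := by simp
  map_smul' c D := by simp

/-- The homogeneous component `(U_1)_a = {D | D t ∈ K • t^{a+1}}` of the canonical
ℤ-grading of `U_1`. -/
noncomputable def U1comp (a : ℤ) : Submodule K (U1 K) :=
  (Submodule.span K ({T (a + 1)} : Set (LaurentPolynomial K))).comap (evalT K)

/-- `T_ℤ(U_1)`, the set of ℤ-graded identities of `U_1`. -/
def TU1 : Set (FL K) :=
  {f : FL K | ∀ v : ℤ × ℕ → U1 K, (∀ (a : ℤ) (i : ℕ), v (a, i) ∈ U1comp K a) →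
    FreeLieAlgebra.lift K v f = 0}

/-- The left-normed monomial `⁅x_{idx 0}^{a 0}, x_{idx 1}^{a 1}, …, x_{idx n}^{a n}⁆`
in the free Lie algebra, on `n + 1` generators. -/
noncomputable def lnMonFin : ∀ n : ℕ, (Fin (n + 1) → ℤ) → (Fin (n + 1) → ℕ) → FL K
  | 0, a, idx => FreeLieAlgebra.of K (a 0, idx 0)
  | n + 1, a, idx =>
      ⁅lnMonFin n (fun k => a k.castSucc) (fun k => idx k.castSucc),
        FreeLieAlgebra.of K (a (Fin.last (n + 1)), idx (Fin.last (n + 1)))⁆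

/-- Iterated Lie brackets of generators in which each generator `x_i^a` occurs
exactly `d (a, i)` times. -/
inductive IsMonOfMultiDeg : FL K → ((ℤ × ℕ) →₀ ℕ) → Prop
  | gen (p : ℤ × ℕ) : IsMonOfMultiDeg (FreeLieAlgebra.of K p) (Finsupp.single p 1)
  | bracket {u v : FL K} {d e : (ℤ × ℕ) →₀ ℕ} :
      IsMonOfMultiDeg u d → IsMonOfMultiDeg v e → IsMonOfMultiDeg ⁅u, v⁆ (d + e)

/-- `f` is multihomogeneous of multidegree `d`. -/
def IsMultiHom (f : FL K) (d : (ℤ × ℕ) →₀ ℕ) : Prop :=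
  f ∈ Submodule.span K {w : FL K | IsMonOfMultiDeg K w d}

section AuxLemmas

variable {K : Type*} [Field K]

/-! ### Derivations of Laurent polynomials -/

private lemma aux_step (D : U1 K) (m : ℤ)
    (h : D (T (m + 1)) = ((m + 1 : ℤ) : K) • (T m * D (T 1))) :
    D (T m) = ((m : ℤ) : K) • (T (m - 1) * D (T 1)) := by
  have key : D (T (m + 1)) = T m * D (T 1) + T 1 * D (T m) := by
    rw [T_add, Derivation.leibniz, smul_eq_mul, smul_eq_mul]
  have h5 : (T (-1 : ℤ) : LaurentPolynomial K) * T (1 : ℤ) = 1 := by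
    rw [← T_add]; norm_num
  have hfact : ∀ (c : K) (y : LaurentPolynomial K),
      T (-1 : ℤ) * (c • y - y) = (c - 1) • (T (-1 : ℤ) * y) := by
    intro c y
    rw [mul_sub, mul_smul_comm, sub_smul, one_smul]
  calc D (T m) = (T (-1 : ℤ) * T (1 : ℤ)) * D (T m) := by rw [h5, one_mul]
    _ = T (-1 : ℤ) * (D (T (m + 1)) - T m * D (T 1)) := by
        rw [mul_assoc]; congr 1; rw [key]; ring
    _ = T (-1 : ℤ) * (((m + 1 : ℤ) : K) • (T m * D (T 1)) - T m * D (T 1)) := by rw [h]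
    _ = (((m + 1 : ℤ) : K) - 1) • (T (-1 : ℤ) * (T m * D (T 1))) := hfact _ _
    _ = ((m : ℤ) : K) • (T (m - 1) * D (T 1)) := by
        rw [← mul_assoc, ← T_add, show (-1 + m : ℤ) = m - 1 by ring]
        congr 1
        push_cast
        ring

lemma aux_deriv_T (D : U1 K) (m : ℤ) :
    D (T m) = ((m : ℤ) : K) • (T (m - 1) * D (T 1)) := by
  induction m using Int.induction_on with
  | zero => simp
  | succ k ih =>
    have h1 : (T ((k : ℤ) + 1) : LaurentPolynomial K) = T k * T 1 := T_add _ _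
    have h2 : (1 : ℤ) + ((k : ℤ) - 1) = k := by ring
    rw [h1, Derivation.leibniz, ih, smul_eq_mul, smul_eq_mul, mul_smul_comm, ← mul_assoc,
      ← T_add, h2, show ((k : ℤ) + 1 - 1 : ℤ) = (k : ℤ) by ring]
    push_cast
    rw [add_smul, one_smul, add_comm]
  | pred k ih =>
    exact aux_step D (-(k : ℤ) - 1)
      (by rw [show (-(k : ℤ) - 1 + 1 : ℤ) = -(k : ℤ) by ring]; exact ih)

lemma aux_deriv_eq_zero (D : U1 K) (h : D (T 1) = 0) : D = 0 := by
  apply Derivation.ext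
  intro f
  rw [Derivation.zero_apply]
  induction f using LaurentPolynomial.induction_on' with
  | add p q hp hq => rw [map_add, hp, hq, add_zero]
  | C_mul_T n c =>
    rw [Derivation.leibniz, aux_deriv_T, h, mul_zero, smul_zero, smul_zero,
      C_eq_algebraMap, Derivation.map_algebraMap, smul_zero, add_zero]

lemma aux_bracket_eval (D E : U1 K) (a b : ℤ) (c d : K)
    (hD : D (T 1) = c • T (a + 1)) (hE : E (T 1) = d • T (b + 1)) :
    ⁅D, E⁆ (T 1) = ((((b - a : ℤ) : K)) * (c * d)) • T (a + b + 1) := by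
  rw [Derivation.commutator_apply, hD, hE, Derivation.map_smul, Derivation.map_smul,
    aux_deriv_T D (b + 1), aux_deriv_T E (a + 1), hD, hE]
  rw [show ((a : ℤ) + 1 - 1 : ℤ) = a by ring, show ((b : ℤ) + 1 - 1 : ℤ) = b by ring]
  rw [mul_smul_comm, mul_smul_comm, ← T_add, ← T_add,
    show ((b : ℤ) + (a + 1) : ℤ) = a + b + 1 by ring,
    show ((a : ℤ) + (b + 1) : ℤ) = a + b + 1 by ring]
  rw [smul_smul, smul_smul, smul_smul, smul_smul, ← sub_smul]
  congr 1
  push_cast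
  ring

/-! ### Left-normed folds -/

noncomputable def foldBr (u : FL K) (l : List (ℤ × ℕ)) : FL K :=
  l.foldl (fun w p => ⁅w, FreeLieAlgebra.of K p⁆) u

noncomputable def foldU (v : ℤ × ℕ → U1 K) (D : U1 K) (l : List (ℤ × ℕ)) : U1 K :=
  l.foldl (fun w p => ⁅w, v p⁆) D

lemma aux_foldBr_concat (u : FL K) (l : List (ℤ × ℕ)) (p : ℤ × ℕ) :
    foldBr u (l.concat p) = ⁅foldBr u l, FreeLieAlgebra.of K p⁆ := by
  simp [foldBr, List.foldl_concat]

lemma aux_lnMonFin_eq (n : ℕ) (a : Fin (n + 1) → ℤ) (idx : Fin (n + 1) → ℕ) :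
    lnMonFin K n a idx =
      foldBr (FreeLieAlgebra.of K (a 0, idx 0))
        (List.ofFn fun k : Fin n => (a k.succ, idx k.succ)) := by
  induction n with
  | zero => simp [lnMonFin, foldBr]
  | succ n ih =>
    rw [lnMonFin, ih, List.ofFn_succ', aux_foldBr_concat]
    simp only [Fin.castSucc_zero, Fin.succ_castSucc, Fin.succ_last]

lemma aux_lift_foldBr (v : ℤ × ℕ → U1 K) (l : List (ℤ × ℕ)) :
    ∀ u : FL K, FreeLieAlgebra.lift K v (foldBr u l) = foldU v (FreeLieAlgebra.lift K v u) l := by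
  induction l with
  | nil => intro u; rfl
  | cons p t ih =>
    intro u
    show FreeLieAlgebra.lift K v (foldBr ⁅u, FreeLieAlgebra.of K p⁆ t) = _
    rw [ih ⁅u, FreeLieAlgebra.of K p⁆]
    show _ = foldU v ⁅FreeLieAlgebra.lift K v u, v p⁆ t
    rw [LieHom.map_lie, FreeLieAlgebra.lift_of_apply]

lemma aux_foldU_zero (v : ℤ × ℕ → U1 K) (l : List (ℤ × ℕ)) : foldU v 0 l = 0 := by
  induction l with
  | nil => rfl
  | cons p t ih =>
    show foldU v ⁅(0 : U1 K), v p⁆ t = 0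
    have hz : ⁅(0 : U1 K), v p⁆ = (0 : U1 K) := by
      ext f; simp [Derivation.commutator_apply]
    rw [hz]; exact ih

/-! ### Graded evaluation -/

def GoodL : ℤ → List ℤ → Prop
  | _, [] => True
  | s, b :: t => Odd (s + b) ∧ GoodL (s + b) t

lemma aux_mem_U1comp {D : U1 K} {a : ℤ} (h : D ∈ U1comp K a) :
    ∃ c : K, D (T 1) = c • T (a + 1) := by
  obtain ⟨c, hc⟩ := Submodule.mem_span_singleton.mp (Submodule.mem_comap.mp h)
  exact ⟨c, hc.symm⟩

lemma aux_eval [CharP K 2] (v : ℤ × ℕ → U1 K) (hv : ∀ (a : ℤ) (i : ℕ), v (a, i) ∈ U1comp K a)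
    (l : List (ℤ × ℕ)) : ∀ (D : U1 K) (S : ℤ), (∃ c : K, D (T 1) = c • T (S + 1)) →
    (∃ c : K, (foldU v D l) (T 1) = c • T (S + (l.map Prod.fst).sum + 1)) ∧
    (¬ GoodL S (l.map Prod.fst) → foldU v D l = 0) := by
  induction l with
  | nil =>
    intro D S h
    refine ⟨by simpa [foldU] using h, fun h' => absurd trivial h'⟩
  | cons p t ih =>
    intro D S hD
    obtain ⟨c, hc⟩ := hD
    obtain ⟨d, hd⟩ : ∃ d : K, v p (T 1) = d • T (p.1 + 1) := by
      have h := aux_mem_U1comp (hv p.1 p.2)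
      simpa only [Prod.mk.eta] using h
    have hbr : ⁅D, v p⁆ (T 1) = (((p.1 - S : ℤ) : K) * (c * d)) • T (S + p.1 + 1) :=
      aux_bracket_eval D (v p) S p.1 c d hc hd
    have hfold : foldU v D (p :: t) = foldU v ⁅D, v p⁆ t := rfl
    have hrec := ih ⁅D, v p⁆ (S + p.1) ⟨_, hbr⟩
    constructor
    · obtain ⟨c', hc'⟩ := hrec.1
      refine ⟨c', ?_⟩
      rw [hfold, hc', show (S + p.1 + (t.map Prod.fst).sum + 1 : ℤ)
        = S + ((p :: t).map Prod.fst).sum + 1 by simp; ring]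
    · intro hbad
      rw [List.map_cons] at hbad
      by_cases h1 : Odd (S + p.1)
      · have h2 : ¬ GoodL (S + p.1) (t.map Prod.fst) := fun h => hbad ⟨h1, h⟩
        rw [hfold]; exact hrec.2 h2
      · have heven : Even (S + p.1) := Int.not_odd_iff_even.mp h1
        have heven' : Even (p.1 - S) := by
          obtain ⟨r, hr⟩ := heven
          exact ⟨r - S, by omega⟩
        have hzero : ((p.1 - S : ℤ) : K) = 0 := by
          obtain ⟨r, hr⟩ := heven'
          rw [hr]
          push_cast
          have h2 : (2 : K) = 0 := by
            have := CharP.cast_eq_zero K 2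
            norm_num at this
            exact this
          linear_combination (r : K) * h2
        have hDz : ⁅D, v p⁆ = 0 :=
          aux_deriv_eq_zero _ (by rw [hbr, hzero, zero_mul, zero_smul])
        rw [hfold, hDz, aux_foldU_zero]

lemma aux_good_even : ∀ (l : List ℤ) (s : ℤ), Odd s → GoodL s l → ∀ b ∈ l, Even b := by
  intro l
  induction l with
  | nil => intro s _ _ b hb; cases hb
  | cons x t ih =>
    intro s hs hg b hb
    obtain ⟨h1, h2⟩ := hg
    have hx : Even x := (Int.odd_add.mp h1).mp hs
    rcases List.mem_cons.mp hb with rfl | hb'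
    · exact hx
    · exact ih (s + x) h1 h2 b hb'

/-! ### T-span lemmas -/

def SP (K : Type*) [Field K] : Set (FL K) :=
  {f : FL K | ∃ a b : ℤ, a ≡ b [ZMOD 2] ∧
    f = ⁅FreeLieAlgebra.of K (a, 1), FreeLieAlgebra.of K (b, 2)⁆}

lemma aux_TSpan_zero {S : Set (FL K)} : (0 : FL K) ∈ TSpan K S := fun I _ _ => I.zero_mem'

lemma aux_TSpan_add {S : Set (FL K)} {x y : FL K} (hx : x ∈ TSpan K S) (hy : y ∈ TSpan K S) :
    x + y ∈ TSpan K S := fun I hI hS => add_mem (hx I hI hS) (hy I hI hS)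

lemma aux_TSpan_neg {S : Set (FL K)} {x : FL K} (hx : x ∈ TSpan K S) : -x ∈ TSpan K S :=
  fun I hI hS => neg_mem (hx I hI hS)

lemma aux_TSpan_lie {S : Set (FL K)} (y : FL K) {x : FL K} (hx : x ∈ TSpan K S) :
    ⁅y, x⁆ ∈ TSpan K S :=
  fun I hI hS => I.lie_mem (hx I hI hS)

lemma aux_TSpan_lie' {S : Set (FL K)} (y : FL K) {x : FL K} (hx : x ∈ TSpan K S) :
    ⁅x, y⁆ ∈ TSpan K S := by
  rw [← lie_skew]
  exact aux_TSpan_neg (aux_TSpan_lie y hx)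

lemma aux_TSpan_gen (a b : ℤ) (i j : ℕ) (hab : a ≡ b [ZMOD 2]) :
    ⁅FreeLieAlgebra.of K (a, i), FreeLieAlgebra.of K (b, j)⁆ ∈ TSpan K (SP K) := by
  intro I hI hS
  set r : ℤ × ℕ → ℤ × ℕ := fun p =>
    if p = (a, 1) then (a, i) else if p = (b, 2) then (b, j) else p with hr
  have hr1 : ∀ p : ℤ × ℕ, (r p).1 = p.1 := by
    intro p
    rw [hr]
    by_cases h1 : p = (a, 1)
    · simp [h1]
    · by_cases h2 : p = (b, 2) <;> simp [h1, h2]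
  set φ : FL K →ₗ⁅K⁆ FL K := FreeLieAlgebra.lift K (fun p => FreeLieAlgebra.of K (r p)) with hφ
  have hφg : IsGradedEndo K φ := by
    intro c m
    rw [hφ, FreeLieAlgebra.lift_of_apply]
    apply Submodule.subset_span
    have : r (c, m) = (c, (r (c, m)).2) := by
      have := hr1 (c, m)
      ext <;> simp [this]
    rw [this]
    exact IsHomBracket.gen c _
  have hg : ⁅FreeLieAlgebra.of K (a, 1), FreeLieAlgebra.of K (b, 2)⁆ ∈ I :=
    hS ⟨a, b, hab, rfl⟩
  have := hI φ hφg _ hg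
  rw [hφ, LieHom.map_lie, FreeLieAlgebra.lift_of_apply, FreeLieAlgebra.lift_of_apply] at this
  have e1 : r (a, 1) = (a, i) := by rw [hr]; simp
  have e2 : r (b, 2) = (b, j) := by
    rw [hr]
    by_cases h : (b, (2 : ℕ)) = (a, (1 : ℕ))
    · exact absurd (congrArg Prod.snd h) (by norm_num)
    · simp [h]
  rwa [e1, e2] at this

lemma aux_fold_sub (l : List (ℤ × ℕ)) :
    ∀ {u u' : FL K}, u - u' ∈ TSpan K (SP K) →
      foldBr u l - foldBr u' l ∈ TSpan K (SP K) := by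
  induction l with
  | nil => intro u u' h; exact h
  | cons p t ih =>
    intro u u' h
    show foldBr ⁅u, FreeLieAlgebra.of K p⁆ t - foldBr ⁅u', FreeLieAlgebra.of K p⁆ t ∈ _
    apply ih
    rw [← sub_lie]
    exact aux_TSpan_lie' _ h

lemma aux_fold_perm {l l' : List (ℤ × ℕ)} (h : l.Perm l') (hev : ∀ q ∈ l, Even q.1) :
    ∀ u : FL K, foldBr u l - foldBr u l' ∈ TSpan K (SP K) := by
  induction h with
  | nil => intro u; simpa using aux_TSpan_zero
  | cons x h ih =>
    intro u
    exact ih (fun q hq => hev q (List.mem_cons_of_mem _ hq)) ⁅u, FreeLieAlgebra.of K x⁆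
  | swap x y t =>
    intro u
    have hy : Even y.1 := hev y (by simp)
    have hx : Even x.1 := hev x (by simp)
    show foldBr ⁅⁅u, FreeLieAlgebra.of K y⁆, FreeLieAlgebra.of K x⁆ t
      - foldBr ⁅⁅u, FreeLieAlgebra.of K x⁆, FreeLieAlgebra.of K y⁆ t ∈ _
    apply aux_fold_sub
    have hid : ⁅⁅u, FreeLieAlgebra.of K y⁆, FreeLieAlgebra.of K x⁆
        - ⁅⁅u, FreeLieAlgebra.of K x⁆, FreeLieAlgebra.of K y⁆
        = ⁅u, ⁅FreeLieAlgebra.of K y, FreeLieAlgebra.of K x⁆⁆ := by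
      rw [leibniz_lie u (FreeLieAlgebra.of K y) (FreeLieAlgebra.of K x),
        ← lie_skew ⁅u, FreeLieAlgebra.of K x⁆ (FreeLieAlgebra.of K y)]
      abel
    rw [hid]
    apply aux_TSpan_lie
    have hmod : y.1 ≡ x.1 [ZMOD 2] := by
      obtain ⟨r, hr⟩ := hy
      obtain ⟨s, hs⟩ := hx
      show y.1 % 2 = x.1 % 2
      omega
    have := aux_TSpan_gen (K := K) y.1 x.1 y.2 x.2 hmod
    simpa only [Prod.mk.eta] using this
  | trans h1 h2 ih1 ih2 =>
    intro u
    have e1 := ih1 hev u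
    have e2 := ih2 (fun q hq => hev q (h1.mem_iff.mpr hq)) u
    have := aux_TSpan_add e1 e2
    rwa [sub_add_sub_cancel] at this

lemma aux_ofFn_perm {α : Type*} [DecidableEq α] {n : ℕ} (f : Fin n → α) (π : Equiv.Perm (Fin n)) :
    (List.ofFn (f ∘ π)).Perm (List.ofFn f) := by
  rw [List.ofFn_eq_map, List.ofFn_eq_map, ← List.map_map]
  apply List.Perm.map
  apply List.perm_of_nodup_nodup_toFinset_eq
  · exact (List.nodup_finRange n).map π.injective
  · exact List.nodup_finRange n
  · ext x
    simp only [List.mem_toFinset, List.mem_map, List.mem_finRange, true_and]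
    exact ⟨fun _ => trivial, fun _ => ⟨π.symm x, by simp⟩⟩

/-! ### Characteristic two -/

lemma aux_neg_eq [CharP K 2] (x : FL K) : -x = x := by
  rw [← neg_one_smul K x, CharTwo.neg_eq (1 : K), one_smul]

lemma aux_swap01 [CharP K 2] (m : ℕ) (a : Fin (m + 2) → ℤ) (idx : Fin (m + 2) → ℕ) :
    lnMonFin K (m + 1) a idx
      = lnMonFin K (m + 1) (a ∘ Equiv.swap 0 1) (idx ∘ Equiv.swap 0 1) := by
  rw [aux_lnMonFin_eq, aux_lnMonFin_eq, List.ofFn_succ, List.ofFn_succ]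
  have hs0 : (Equiv.swap (0 : Fin (m + 2)) 1) 0 = 1 := Equiv.swap_apply_left _ _
  have hs1 : (Equiv.swap (0 : Fin (m + 2)) 1) 1 = 0 := Equiv.swap_apply_right _ _
  have hsk : ∀ i : Fin m, (Equiv.swap (0 : Fin (m + 2)) 1) i.succ.succ = i.succ.succ := by
    intro i
    apply Equiv.swap_apply_of_ne_of_ne
    · exact Fin.succ_ne_zero _
    · rw [← Fin.succ_zero_eq_one]
      intro h
      exact Fin.succ_ne_zero i (Fin.succ_injective _ h)
  show foldBr ⁅FreeLieAlgebra.of K (a 0, idx 0),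
      FreeLieAlgebra.of K (a (0 : Fin (m+1)).succ, idx (0 : Fin (m+1)).succ)⁆ _ = _
  show _ = foldBr ⁅FreeLieAlgebra.of K ((a ∘ Equiv.swap 0 1) 0, (idx ∘ Equiv.swap 0 1) 0),
      FreeLieAlgebra.of K ((a ∘ Equiv.swap 0 1) (0 : Fin (m+1)).succ,
        (idx ∘ Equiv.swap 0 1) (0 : Fin (m+1)).succ)⁆ _
  have htail : (List.ofFn fun i : Fin m =>
        ((a ∘ Equiv.swap 0 1) (i.succ).succ, (idx ∘ Equiv.swap 0 1) (i.succ).succ))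
      = (List.ofFn fun i : Fin m => (a (i.succ).succ, idx (i.succ).succ)) :=
    congrArg List.ofFn (funext fun i => by simp only [Function.comp_apply, hsk i])
  rw [htail]
  congr 1
  simp only [Function.comp_apply, Fin.succ_zero_eq_one, hs0, hs1]
  rw [← lie_skew, aux_neg_eq]

end AuxLemmas


/-- Lemma 3.3: a left-normed monomial that is not a graded identity of `U_1` can be
rewritten, modulo the `T_ℤ`-ideal generated by the same-parity brackets, with first
variable of odd degree and the remaining variables of even, nondecreasing, degrees. -/
theorem monomial_normal_form [CharP K 2] (n : ℕ) (hn : 1 ≤ n)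
    (a : Fin (n + 1) → ℤ) (idx : Fin (n + 1) → ℕ)
    (hM : lnMonFin K n a idx ∉ TU1 K) :
    ∃ σ : Equiv.Perm (Fin (n + 1)),
      Odd (a (σ 0)) ∧
      (∀ k : Fin (n + 1), k ≠ 0 → Even (a (σ k))) ∧
      (∀ k l : Fin (n + 1), k ≠ 0 → k ≤ l → a (σ k) ≤ a (σ l)) ∧
      lnMonFin K n a idx - lnMonFin K n (a ∘ σ) (idx ∘ σ) ∈
        TSpan K {f : FL K | ∃ a b : ℤ, a ≡ b [ZMOD 2] ∧
      f = ⁅FreeLieAlgebra.of K (a, 1), FreeLieAlgebra.of K (b, 2)⁆} := by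
  classical
  obtain ⟨m, rfl⟩ : ∃ m, n = m + 1 := ⟨n - 1, by omega⟩
  -- Part 1: parity constraints from non-identity
  rw [TU1, Set.mem_setOf_eq] at hM
  push_neg at hM
  obtain ⟨v, hv, hne⟩ := hM
  have hval : FreeLieAlgebra.lift K v (lnMonFin K (m + 1) a idx)
      = foldU v (v (a 0, idx 0)) (List.ofFn fun k : Fin (m + 1) => (a k.succ, idx k.succ)) := by
    rw [aux_lnMonFin_eq, aux_lift_foldBr, FreeLieAlgebra.lift_of_apply]
  have hGood : GoodL (a 0)
      ((List.ofFn fun k : Fin (m + 1) => (a k.succ, idx k.succ)).map Prod.fst) := by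
    by_contra hbad
    exact hne (hval.trans
      ((aux_eval v hv _ (v (a 0, idx 0)) (a 0) (aux_mem_U1comp (hv (a 0) (idx 0)))).2 hbad))
  rw [List.map_ofFn] at hGood
  have hfeq : (Prod.fst ∘ fun k : Fin (m + 1) => (a k.succ, idx k.succ))
      = fun k : Fin (m + 1) => a k.succ := rfl
  rw [hfeq, List.ofFn_succ] at hGood
  have h01 : Odd (a 0 + a 1) := by
    have := hGood.1
    rwa [Fin.succ_zero_eq_one] at this
  have hEven2 : ∀ i : Fin m, Even (a i.succ.succ) := by
    intro i
    refine aux_good_even _ _ hGood.1 hGood.2 _ ?_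
    rw [List.mem_ofFn]
    exact ⟨i, rfl⟩
  have hEven' : ∀ k : Fin (m + 2), k ≠ 0 → k ≠ 1 → Even (a k) := by
    intro k hk0 hk1
    induction k using Fin.cases with
    | zero => exact absurd rfl hk0
    | succ j =>
      induction j using Fin.cases with
      | zero => exact absurd Fin.succ_zero_eq_one hk1
      | succ i => exact hEven2 i
  -- the head-normalizing permutation τ
  obtain ⟨τ, hMτ, hτodd, hτev⟩ : ∃ τ : Equiv.Perm (Fin (m + 2)),
      lnMonFin K (m + 1) a idx = lnMonFin K (m + 1) (a ∘ τ) (idx ∘ τ) ∧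
      Odd ((a ∘ τ) 0) ∧ ∀ k : Fin (m + 1), Even ((a ∘ τ) k.succ) := by
    by_cases h0 : Odd (a 0)
    · refine ⟨Equiv.refl _, by simp, by simpa using h0, ?_⟩
      intro k
      simp only [Equiv.coe_refl, Function.comp_id, Function.comp_apply, Equiv.refl_apply]
      by_cases hk : k = 0
      · subst hk
        rw [Fin.succ_zero_eq_one]
        exact (Int.odd_add.mp h01).mp h0
      · refine hEven' k.succ (Fin.succ_ne_zero k) ?_
        rw [← Fin.succ_zero_eq_one]
        exact fun h => hk (Fin.succ_injective _ h)
    · have hE0 : Even (a 0) := Int.not_odd_iff_even.mp h0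
      have hO1 : Odd (a 1) :=
        Int.not_even_iff_odd.mp (fun he => h0 ((Int.odd_add.mp h01).mpr he))
      refine ⟨Equiv.swap 0 1, aux_swap01 m a idx, ?_, ?_⟩
      · simpa [Equiv.swap_apply_left] using hO1
      · intro k
        simp only [Function.comp_apply]
        by_cases hk : k = 0
        · subst hk
          rw [Fin.succ_zero_eq_one, Equiv.swap_apply_right]
          exact hE0
        · have hne0 : k.succ ≠ 0 := Fin.succ_ne_zero k
          have hne1 : k.succ ≠ 1 := by
            rw [← Fin.succ_zero_eq_one]
            exact fun h => hk (Fin.succ_injective _ h)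
          rw [Equiv.swap_apply_of_ne_of_ne hne0 hne1]
          exact hEven' k.succ hne0 hne1
  -- the sorting permutation ρ
  set g : Fin (m + 1) → ℤ := fun i => (a ∘ τ) i.succ with hg
  set π : Equiv.Perm (Fin (m + 1)) := Tuple.sort g with hπ
  set ρ : Equiv.Perm (Fin (m + 2)) := Equiv.Perm.decomposeFin.symm (0, π) with hρ
  have hρ0 : ρ 0 = 0 := Equiv.Perm.decomposeFin_symm_apply_zero 0 π
  have hρs : ∀ i : Fin (m + 1), ρ i.succ = (π i).succ := by
    intro i
    rw [hρ, Equiv.Perm.decomposeFin_symm_apply_succ, Equiv.swap_self]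
    rfl
  refine ⟨ρ.trans τ, ?_, ?_, ?_, ?_⟩
  · rw [Equiv.trans_apply, hρ0]
    exact hτodd
  · intro k hk
    induction k using Fin.cases with
    | zero => exact absurd rfl hk
    | succ i =>
      rw [Equiv.trans_apply, hρs]
      exact hτev (π i)
  · intro k l hk hkl
    induction k using Fin.cases with
    | zero => exact absurd rfl hk
    | succ i =>
      induction l using Fin.cases with
      | zero =>
        exact absurd (Fin.le_zero_iff.mp hkl) (Fin.succ_ne_zero i)
      | succ j =>
        rw [Equiv.trans_apply, Equiv.trans_apply, hρs, hρs]
        have hij : i ≤ j := Fin.succ_le_succ_iff.mp hkl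
        exact Tuple.monotone_sort g hij
  · have hMσ : lnMonFin K (m + 1) (a ∘ (ρ.trans τ)) (idx ∘ (ρ.trans τ))
        = lnMonFin K (m + 1) ((a ∘ τ) ∘ ρ) ((idx ∘ τ) ∘ ρ) := by
      congr 1
    rw [hMτ, hMσ, aux_lnMonFin_eq, aux_lnMonFin_eq]
    have hhead : (((a ∘ τ) ∘ ρ) 0, ((idx ∘ τ) ∘ ρ) 0) = ((a ∘ τ) 0, (idx ∘ τ) 0) := by
      simp only [Function.comp_apply, hρ0]
    rw [hhead]
    have htail : (List.ofFn fun k : Fin (m + 1) =>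
          (((a ∘ τ) ∘ ρ) k.succ, ((idx ∘ τ) ∘ ρ) k.succ))
        = List.ofFn ((fun k : Fin (m + 1) => ((a ∘ τ) k.succ, (idx ∘ τ) k.succ)) ∘ π) :=
      congrArg List.ofFn (funext fun k => by
        simp only [Function.comp_apply, hρs k])
    rw [htail]
    have hperm := (aux_ofFn_perm
      (fun k : Fin (m + 1) => ((a ∘ τ) k.succ, (idx ∘ τ) k.succ)) π).symm
    have hev : ∀ q ∈ List.ofFn (fun k : Fin (m + 1) => ((a ∘ τ) k.succ, (idx ∘ τ) k.succ)),
        Even q.1 := by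
      intro q hq
      rw [List.mem_ofFn] at hq
      obtain ⟨i, rfl⟩ := hq
      exact hτev i
    exact aux_fold_perm hperm hev _
end

section
/- Let K be a field and let i, j ∈ ℤ. If D_i, D_j, D are K-linear derivations of LaurentPolynomial K with D_i t = t^{i+1}, D_j t = t^{j+1} and D t = t^{i+j+1}, then ⁅D_i, D_j⁆ = (((j − i : ℤ) : K)) • D. (The multiplication rule [e_i, e_j] = (j − i) e_{i+j} holds in U_1.) -/
open LaurentPolynomial

variable (K : Type*) [Field K]

lemma deriv_T_nat (D : Derivation K (LaurentPolynomial K) (LaurentPolynomial K)) (n : ℕ) :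
    D (T (n : ℤ)) = (n : LaurentPolynomial K) * (T ((n : ℤ) - 1) * D (T 1)) := by
  induction n with
  | zero => simp [T_zero]
  | succ k ih =>
      have h : (T 1 : LaurentPolynomial K) * T ((k : ℤ) - 1) = T (k : ℤ) := by
        rw [← T_add]; ring_nf
      have hT : (T ((k : ℤ) + 1 - 1) : LaurentPolynomial K) = T (k : ℤ) := by norm_num
      push_cast
      rw [T_add, Derivation.leibniz, ih, smul_eq_mul, smul_eq_mul, hT]
      linear_combination ((k : LaurentPolynomial K)) * D (T 1) * h

lemma deriv_T (D : Derivation K (LaurentPolynomial K) (LaurentPolynomial K)) (n : ℤ) :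
    D (T n) = ((n : ℤ) : LaurentPolynomial K) * (T (n - 1) * D (T 1)) := by
  rcases le_or_gt 0 n with hn | hn
  · lift n to ℕ using hn
    rw [deriv_T_nat K D n]; push_cast; ring
  · obtain ⟨m, rfl⟩ : ∃ m : ℕ, n = -(m : ℤ) := ⟨n.natAbs, by omega⟩
    apply (isUnit_T (R := K) (m : ℤ)).mul_left_cancel
    have h1 : (T (-(m:ℤ)) : LaurentPolynomial K) * T (m : ℤ) = 1 := by
      rw [← T_add]; ring_nf; exact T_zero
    have h2 := Derivation.leibniz D (T (-(m:ℤ)) : LaurentPolynomial K) (T (m : ℤ))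
    rw [h1, Derivation.map_one_eq_zero, deriv_T_nat, smul_eq_mul, smul_eq_mul] at h2
    have h3 : (T (-(m:ℤ)) : LaurentPolynomial K) * T ((m:ℤ) - 1) = T (-1) := by
      rw [← T_add]; ring_nf
    have h4 : (T (m:ℤ) : LaurentPolynomial K) * T (-(m:ℤ) - 1) = T (-1) := by
      rw [← T_add]; ring_nf
    have hc : ((-(m:ℤ) : ℤ) : LaurentPolynomial K) = -(m : LaurentPolynomial K) := by
      push_cast; ring
    rw [hc]
    linear_combination -h2 - (m : LaurentPolynomial K) * D (T 1) * h3
      + (m : LaurentPolynomial K) * D (T 1) * h4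

lemma deriv_ext {D₁ D₂ : Derivation K (LaurentPolynomial K) (LaurentPolynomial K)}
    (h : D₁ (T 1) = D₂ (T 1)) : D₁ = D₂ := by
  refine Derivation.ext fun p => ?_
  induction p using LaurentPolynomial.induction_on' with
  | add p q hp hq => simp [map_add, hp, hq]
  | C_mul_T n a =>
      rw [C_eq_algebraMap]
      simp only [Derivation.leibniz, Derivation.map_algebraMap, smul_zero, zero_add]
      rw [deriv_T K D₁, deriv_T K D₂, h]

/-- Eq. (2.2): the multiplication rule `[e_i, e_j] = (j - i) e_{i+j}` in `U_1`, where
`e_n` is the derivation of `K[t,t⁻¹]` with `e_n t = t^{n+1}`. -/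
theorem bracket_basis_derivations (i j : ℤ)
    (Di Dj D : Derivation K (LaurentPolynomial K) (LaurentPolynomial K))
    (hi : Di (T 1) = T (i + 1)) (hj : Dj (T 1) = T (j + 1))
    (hD : D (T 1) = T (i + j + 1)) :
    ⁅Di, Dj⁆ = ((j - i : ℤ) : K) • D := by
  apply deriv_ext
  rw [Derivation.commutator_apply, Derivation.smul_apply, hi, hj, hD,
    deriv_T K Di (j+1), deriv_T K Dj (i+1), hi, hj, Algebra.smul_def]
  have h1 : (T (j + 1 - 1) : LaurentPolynomial K) * T (i + 1) = T (i + j + 1) := by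
    rw [← T_add]; ring_nf
  have h2 : (T (i + 1 - 1) : LaurentPolynomial K) * T (j + 1) = T (i + j + 1) := by
    rw [← T_add]; ring_nf
  have h3 : algebraMap K (LaurentPolynomial K) ((j - i : ℤ) : K)
      = ((j - i : ℤ) : LaurentPolynomial K) := by
    rw [map_intCast]
  rw [h1, h2, h3]
  push_cast
  ring
end

section
/- Let K be a field of characteristic 2, let n ≥ 1, let a_0, a_1, …, a_n ∈ ℤ, and let D_0, D_1, …, D_n be K-linear derivations of LaurentPolynomial K with D_k t = t^{a_k + 1} for each k. Then the left-normed bracket ⁅D_0, D_1, …, D_n⁆ is nonzero if and only if exactly one of a_0, a_1 is odd and a_k is even for every 2 ≤ k ≤ n. -/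
open LaurentPolynomial

variable (K : Type*) [Field K]

/-- The left-normed bracket `⁅D 0, D 1, …, D n⁆` of derivations. -/
noncomputable def lnDer {A : Type*} [CommRing A] [Algebra K A]
    (D : ℕ → Derivation K A A) : ℕ → Derivation K A A
  | 0 => D 0
  | n + 1 => ⁅lnDer D n, D (n + 1)⁆

variable {K}

/-- A derivation applied to `T m`. -/
lemma der_apply_T' (D : Derivation K (LaurentPolynomial K) (LaurentPolynomial K)) (m : ℤ) :
    D (T m) = (m : LaurentPolynomial K) * (T (m - 1) * D (T 1)) := by
  induction m using Int.induction_on with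
  | zero => simp [T_zero]
  | succ k ih =>
      have h : (T (k + 1 : ℤ) : LaurentPolynomial K) = T k * T 1 := by rw [← T_add]
      have e : (T 1 : LaurentPolynomial K) * T ((k:ℤ) - 1) = T (k:ℤ) := by
        rw [← T_add]; ring_nf
      rw [h, Derivation.leibniz, smul_eq_mul, smul_eq_mul, ih, add_sub_cancel_right]
      push_cast
      linear_combination ((k : LaurentPolynomial K) * D (T 1)) * e
  | pred k ih =>
      have h : (T (-k : ℤ) : LaurentPolynomial K) = T (-k - 1) * T 1 := by
        rw [← T_add]; ring_nf
      rw [h, Derivation.leibniz, smul_eq_mul, smul_eq_mul] at ih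
      push_cast at ih ⊢
      have hu : (T (1 : ℤ) : LaurentPolynomial K) * T (-1) = 1 := by
        rw [← T_add]; norm_num [T_zero]
      have e2 : (T (-1 : ℤ) : LaurentPolynomial K) * T (-k - 1) = T (-k - 1 - 1) := by
        rw [← T_add]; ring_nf
      linear_combination (T (-1 : ℤ) : LaurentPolynomial K) * ih
        - D (T (-(k:ℤ) - 1)) * hu + (-(k : LaurentPolynomial K) - 1) * D (T 1) * e2

/-- A derivation of the Laurent polynomial ring is determined by its value on `T 1`. -/
lemma der_ext {D E : Derivation K (LaurentPolynomial K) (LaurentPolynomial K)}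
    (h : D (T 1) = E (T 1)) : D = E := by
  apply Derivation.ext
  intro f
  induction f using LaurentPolynomial.induction_on' with
  | add p q hp hq => simp [hp, hq]
  | C_mul_T n r =>
      rw [C_eq_algebraMap, Derivation.leibniz, Derivation.leibniz,
        Derivation.map_algebraMap, Derivation.map_algebraMap,
        der_apply_T' D, der_apply_T' E, h]

/-- The integer coefficient of the left-normed bracket. -/
noncomputable def cAux (a : ℕ → ℤ) : ℕ → ℤ
  | 0 => 1
  | m + 1 => cAux a m * (a (m + 1) - ∑ k ∈ Finset.range (m + 1), a k)

lemma lnDer_apply (a : ℕ → ℤ)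
    (D : ℕ → Derivation K (LaurentPolynomial K) (LaurentPolynomial K)) (m : ℕ)
    (hD : ∀ k ≤ m, (D k) (T 1) = T (a k + 1)) :
    lnDer K D m (T 1)
      = (cAux a m : LaurentPolynomial K) * T ((∑ k ∈ Finset.range (m + 1), a k) + 1) := by
  induction m with
  | zero =>
      simpa [lnDer, cAux] using hD 0 le_rfl
  | succ m ih =>
      have ih' := ih (fun k hk => hD k (hk.trans (Nat.le_succ m)))
      set S : ℤ := ∑ k ∈ Finset.range (m + 1), a k with hS
      have hsum : (∑ k ∈ Finset.range (m + 2), a k) = S + a (m + 1) := by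
        rw [Finset.sum_range_succ]
      show (⁅lnDer K D m, D (m + 1)⁆ : Derivation K _ _) (T 1) = _
      rw [Derivation.commutator_apply, hD (m + 1) le_rfl, ih',
        der_apply_T' (lnDer K D m) (a (m + 1) + 1),
        Derivation.leibniz, Derivation.map_intCast, smul_zero, add_zero, smul_eq_mul,
        der_apply_T' (D (m + 1)) (S + 1), ih', hD (m + 1) le_rfl, hsum]
      have e1 : (T (a (m + 1) + 1 - 1) : LaurentPolynomial K) * T (S + 1)
          = T (S + a (m + 1) + 1) := by rw [← T_add]; ring_nf
      have e2 : (T (S + 1 - 1) : LaurentPolynomial K) * T (a (m + 1) + 1)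
          = T (S + a (m + 1) + 1) := by rw [← T_add]; ring_nf
      show _ = ((cAux a m * (a (m + 1) - S) : ℤ) : LaurentPolynomial K) * _
      push_cast
      linear_combination
        ((a (m+1) : LaurentPolynomial K) + 1) * (cAux a m : LaurentPolynomial K) * e1
        - ((S : LaurentPolynomial K) + 1) * (cAux a m : LaurentPolynomial K) * e2

lemma odd_cAux (a : ℕ → ℤ) (n : ℕ) (hn : 1 ≤ n) :
    (Odd (cAux a n) ↔
      (Xor' (Odd (a 0)) (Odd (a 1)) ∧ ∀ k : ℕ, 2 ≤ k → k ≤ n → Even (a k)))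
    ∧ (Odd (cAux a n) → Odd (∑ k ∈ Finset.range (n + 1), a k)) := by
  induction n, hn using Nat.le_induction with
  | base =>
      have h1 : cAux a 1 = 1 * (a 1 - a 0) := by simp [cAux]
      have h2 : (∑ k ∈ Finset.range 2, a k) = a 0 + a 1 := by
        simp [Finset.sum_range_succ]
      rw [h1, h2, one_mul]
      refine ⟨⟨fun h => ⟨?_, fun k hk1 hk2 => absurd (hk1.trans hk2) (by norm_num)⟩,
        fun h => ?_⟩, fun h => ?_⟩
      · simp only [Xor', xor_def, Int.odd_iff, Int.even_iff] at h ⊢; omega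
      · obtain ⟨hx, -⟩ := h
        simp only [Xor', xor_def, Int.odd_iff, Int.even_iff] at hx ⊢; omega
      · simp only [Int.odd_iff] at h ⊢; omega
  | succ n hn ih =>
      obtain ⟨ih1, ih2⟩ := ih
      have hc : cAux a (n + 1) = cAux a n * (a (n + 1) - ∑ k ∈ Finset.range (n + 1), a k) := rfl
      have hsum : (∑ k ∈ Finset.range (n + 1 + 1), a k)
          = (∑ k ∈ Finset.range (n + 1), a k) + a (n + 1) := Finset.sum_range_succ a (n + 1)
      rw [hc, hsum, Int.odd_mul]
      constructor
      · constructor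
        · rintro ⟨h1, h2⟩
          obtain ⟨hx, hall⟩ := ih1.mp h1
          have hS := ih2 h1
          refine ⟨hx, fun k hk1 hk2 => ?_⟩
          rcases Nat.lt_or_ge k (n + 1) with h | h
          · exact hall k hk1 (by omega)
          · have hk : k = n + 1 := by omega
            subst hk
            simp only [Int.odd_iff, Int.even_iff] at h2 hS ⊢; omega
        · rintro ⟨hx, hall⟩
          have h1 : Odd (cAux a n) := ih1.mpr ⟨hx, fun k hk1 hk2 => hall k hk1 (by omega)⟩
          have hS := ih2 h1
          have he : Even (a (n + 1)) := hall (n + 1) (by omega) le_rfl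
          refine ⟨h1, ?_⟩
          simp only [Int.odd_iff, Int.even_iff] at hS he ⊢; omega
      · rintro ⟨h1, h2⟩
        have hS := ih2 h1
        simp only [Int.odd_iff, Int.even_iff] at hS h2 ⊢; omega

variable (K)

/-- In characteristic two, the left-normed bracket `⁅e_{a_0}, …, e_{a_n}⁆` in `U_1` is
nonzero iff exactly one of `a_0, a_1` is odd and all `a_k`, `2 ≤ k ≤ n`, are even. -/
theorem lnDer_ne_zero_iff [CharP K 2] (n : ℕ) (hn : 1 ≤ n) (a : ℕ → ℤ)
    (D : ℕ → Derivation K (LaurentPolynomial K) (LaurentPolynomial K))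
    (hD : ∀ k ≤ n, (D k) (T 1) = T (a k + 1)) :
    lnDer K D n ≠ 0 ↔
      (Xor' (Odd (a 0)) (Odd (a 1)) ∧ ∀ k : ℕ, 2 ≤ k → k ≤ n → Even (a k)) := by
  have hval := lnDer_apply a D n hD
  have hcast : ((cAux a n : ℤ) : LaurentPolynomial K)
      = algebraMap K (LaurentPolynomial K) ((cAux a n : ℤ) : K) := by
    rw [map_intCast]
  have key : lnDer K D n ≠ 0 ↔ Odd (cAux a n) := by
    constructor
    · intro h
      by_contra hodd
      apply h
      have heven : (2 : ℤ) ∣ cAux a n := by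
        rw [Int.not_odd_iff_even] at hodd
        exact hodd.two_dvd
      have hK : ((cAux a n : ℤ) : K) = 0 := (CharP.intCast_eq_zero_iff K 2 _).mpr heven
      apply der_ext (E := 0)
      rw [hval, hcast, hK]
      simp
    · intro hodd h0
      have hz : lnDer K D n (T 1) = 0 := by rw [h0]; rfl
      rw [hval] at hz
      have hc : ((cAux a n : ℤ) : LaurentPolynomial K) = 0 :=
        ((isUnit_T _).mul_left_eq_zero).mp hz
      rw [hcast] at hc
      have hK : ((cAux a n : ℤ) : K) = 0 :=
        (algebraMap K (LaurentPolynomial K)).injective (by simpa using hc)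
      have : (2 : ℤ) ∣ cAux a n := (CharP.intCast_eq_zero_iff K 2 _).mp hK
      rw [Int.odd_iff] at hodd
      omega
  rw [key, (odd_cAux a n hn).1]
end
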